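/- For every strictly monotone function g : ℕ → ℕ, the function f : {a}* → {a}* defined by f(aⁿ) = a^{g(n)!} (i.e. f maps the word of length n to the word of length (g n)!) is Reg-continuous: for every regular language L ⊆ {a}*, the set {aⁿ | a^{g(n)!} ∈ L} is regular. -/

import Mathlib

/-- For every strictly monotone `g : ℕ → ℕ`, the function `f` over the one-letter
alphabet mapping the word of length `n` to the word of length `(g n)!` is
Reg-continuous. -/
theorem factorial_of_strictMono_reg_continuous (g : ℕ → ℕ) (hg : StrictMono g) :
    ∀ L : Language Unit, L.IsRegular →
      Language.IsRegular
        {w : List Unit | List.replicate (Nat.factorial (g w.length)) () ∈ L} := by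
  intro L hL
  obtain ⟨σ, fσ, M, hM⟩ := hL
  set Q : ℕ → Prop := fun n => List.replicate (Nat.factorial (g n)) () ∈ L with hQ
  set s : ℕ → σ := fun k => M.eval (List.replicate k ()) with hs
  obtain ⟨a, b, hne, hab⟩ := Finite.exists_ne_map_eq_of_infinite s
  obtain ⟨i, j, hij, hsij⟩ : ∃ i j, i < j ∧ s i = s j := by
    rcases lt_or_gt_of_ne hne with h | h
    · exact ⟨a, b, h, hab⟩
    · exact ⟨b, a, h, hab.symm⟩
  set p := j - i with hp
  have hppos : 0 < p := by omega
  have hadd : ∀ a b : ℕ, s (a + b) = M.evalFrom (s a) (List.replicate b ()) := by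
    intro a b
    show M.eval (List.replicate (a + b) ()) =
      M.evalFrom (M.eval (List.replicate a ())) (List.replicate b ())
    rw [List.replicate_add]
    exact M.evalFrom_of_append M.start _ _
  have hper : ∀ t : ℕ, s (i + p + t) = s (i + t) := by
    intro t
    have hj : i + p = j := by omega
    rw [hadd (i + p) t, hadd i t, hj, hsij]
  have hmul : ∀ c, i ≤ c → s (c * p) = s (i * p) := by
    intro c hc
    induction c, hc using Nat.le_induction with
    | base => rfl
    | succ c hc ih =>
      have hle : i ≤ c * p := le_trans hc (Nat.le_mul_of_pos_right c hppos)
      have : (c + 1) * p = i + p + (c * p - i) := by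
        have : c * p = i + (c * p - i) := by omega
        ring_nf
        omega
      rw [this, hper, show i + (c * p - i) = c * p by omega, ih]
  set N := i * p + p with hN
  have hconst : ∀ n, N ≤ n → (Q n ↔ s (i * p) ∈ M.accept) := by
    intro n hn
    have hgn : n ≤ g n := hg.le_apply
    have hpgn : p ≤ g n := by omega
    obtain ⟨c, hc⟩ := Nat.dvd_factorial hppos hpgn
    have hfac : g n ≤ Nat.factorial (g n) := Nat.self_le_factorial _
    have hci : i ≤ c := by
      by_contra h
      push_neg at h
      have h1 : p * c + p ≤ p * i := by
        calc p * c + p = p * (c + 1) := (Nat.mul_succ p c).symm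
        _ ≤ p * i := Nat.mul_le_mul (le_refl p) (by omega)
      have h2 : p * i = i * p := Nat.mul_comm p i
      omega
    have hstate : s (Nat.factorial (g n)) = s (i * p) := by
      rw [hc, Nat.mul_comm, hmul c hci]
    have hQn : Q n ↔ s (Nat.factorial (g n)) ∈ M.accept := by
      rw [hQ]
      simp only [← hM, DFA.mem_accepts]
      exact Iff.rfl
    rw [hQn, hstate]
  set M' : DFA Unit (Fin (N + 1)) :=
    { step := fun q _ => ⟨min (q.val + 1) N, by omega⟩
      start := ⟨0, by omega⟩
      accept := {q | Q q.val} } with hM'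
  refine ⟨Fin (N + 1), inferInstance, M', ?_⟩
  have heval : ∀ w : List Unit, (M'.eval w).val = min w.length N := by
    intro w
    induction w using List.reverseRecOn with
    | nil =>
      show (M'.start).val = min ([] : List Unit).length N
      simp [hM']
    | append_singleton w a ih =>
      rw [DFA.eval_append_singleton]
      have hstep : (M'.step (M'.eval w) a).val = min ((M'.eval w).val + 1) N := rfl
      rw [hstep, ih, List.length_append, List.length_singleton]
      omega
  ext w
  rw [DFA.mem_accepts]
  have hmem : M'.eval w ∈ M'.accept ↔ Q (M'.eval w).val := Iff.rfl
  rw [hmem, heval]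
  show Q (min w.length N) ↔ Q w.length
  rcases le_or_gt w.length N with h | h
  · rw [min_eq_left h]
  · rw [min_eq_right h.le, hconst N le_rfl, hconst w.length h.le]
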